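/- Arzelà–Ascoli theorem in the extended sense on [0, T). Let K ≥ 1 and let (g_n)_{n≥0}, with g_n : [0, T) → ℝ^K, be a sequence of functions that is equicontinuous in the extended sense. Then there exist a continuous function g : [0, T) → ℝ^K and a strictly increasing sequence of indices (n_k) such that g_{n_k} converges to g uniformly on [0, T). -/
import Mathlib


open Filter

theorem arzela_ascoli_extended_sense
    {E : Type*} [NormedAddCommGroup E] [NormedSpace ℝ E] [FiniteDimensional ℝ E]
    [Nontrivial E]
    (T : ℝ) (hT : 0 < T)
    (g : ℕ → ℝ → E)
    (hbound : ∃ C : ℝ, ∀ n : ℕ, ‖g n 0‖ ≤ C)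
    (hequi : ∀ ε : ℝ, 0 < ε → ∃ δ : ℝ, 0 < δ ∧ ∃ N : ℕ, ∀ n ≥ N,
      ∀ t₁ t₂ : ℝ, 0 ≤ t₁ → t₁ ≤ t₂ → t₂ < T → t₂ - t₁ ≤ δ → ‖g n t₁ - g n t₂‖ ≤ ε) :
    ∃ glim : ℝ → E, ContinuousOn glim (Set.Ico 0 T) ∧
      ∃ φ : ℕ → ℕ, StrictMono φ ∧
        TendstoUniformlyOn (fun k => g (φ k)) glim atTop (Set.Ico 0 T) := by
  classical
  obtain ⟨C, hC⟩ := hbound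
  -- Step 1: uniform bound on a tail of the sequence, uniformly on [0,T)
  obtain ⟨δ₁, hδ₁, N₁, hN₁⟩ := hequi 1 one_pos
  set R : ℝ := C + (⌈T / δ₁⌉₊ : ℝ) with hRdef
  have hbd : ∀ n, N₁ ≤ n → ∀ t, 0 ≤ t → t < T → ‖g n t‖ ≤ R := by
    intro n hn t ht htT
    have key : ∀ m : ℕ, ∀ t : ℝ, 0 ≤ t → t < T → t ≤ m * δ₁ → ‖g n t - g n 0‖ ≤ m := by
      intro m
      induction m with
      | zero =>
        intro t ht htT hle
        have : t = 0 := le_antisymm (by simpa using hle) ht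
        simp [this]
      | succ m ih =>
        intro t ht htT hle
        by_cases h : t ≤ δ₁
        · have h1 := hN₁ n hn 0 t le_rfl ht htT (by linarith)
          have : ‖g n t - g n 0‖ ≤ 1 := by rwa [norm_sub_rev] at h1
          have : ‖g n t - g n 0‖ ≤ (m : ℝ) + 1 := by
            have hm : (0:ℝ) ≤ m := Nat.cast_nonneg m
            linarith
          simpa [Nat.cast_succ] using this
        · push_neg at h
          have hs0 : (0:ℝ) ≤ t - δ₁ := by linarith
          have hsT : t - δ₁ < T := by linarith
          have hsm : t - δ₁ ≤ m * δ₁ := by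
            have : t ≤ (m + 1 : ℕ) * δ₁ := hle
            push_cast at this ⊢
            linarith
          have h1 := hN₁ n hn (t - δ₁) t hs0 (by linarith) htT (by linarith)
          have h2 := ih (t - δ₁) hs0 hsT hsm
          calc ‖g n t - g n 0‖ ≤ ‖g n t - g n (t - δ₁)‖ + ‖g n (t - δ₁) - g n 0‖ :=
                norm_sub_le_norm_sub_add_norm_sub _ _ _
            _ ≤ 1 + m := by
                rw [norm_sub_rev] at h1
                exact add_le_add h1 h2
            _ = (m + 1 : ℕ) := by push_cast; ring
    have hm : t ≤ (⌈T / δ₁⌉₊ : ℝ) * δ₁ := by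
      have h1 : T / δ₁ ≤ (⌈T / δ₁⌉₊ : ℝ) := Nat.le_ceil _
      have h2 : T ≤ (⌈T / δ₁⌉₊ : ℝ) * δ₁ := by
        rw [div_le_iff₀ hδ₁] at h1; linarith
      linarith
    have := key ⌈T / δ₁⌉₊ t ht htT hm
    calc ‖g n t‖ ≤ ‖g n t - g n 0‖ + ‖g n 0‖ := by
          simpa using norm_add_le (g n t - g n 0) (g n 0)
      _ ≤ (⌈T / δ₁⌉₊ : ℝ) + C := add_le_add this (hC n)
      _ = R := by rw [hRdef]; ring
  -- countable dense-ish set: rationals in [0,T)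
  set e : ℚ ≃ ℕ := Denumerable.eqv ℚ with hedef
  set D : ℕ → ℝ := fun i =>
    if ((e.symm i : ℚ) : ℝ) ∈ Set.Ico (0:ℝ) T
    then ((e.symm i : ℚ) : ℝ) else 0 with hDdef
  have hDmem : ∀ i, D i ∈ Set.Ico (0:ℝ) T := by
    intro i
    simp only [hDdef]
    by_cases h : ((e.symm i : ℚ) : ℝ) ∈ Set.Ico (0:ℝ) T
    · rw [if_pos h]; exact h
    · rw [if_neg h]; exact ⟨le_refl 0, hT⟩
  have hDsurj : ∀ q : ℚ, (q : ℝ) ∈ Set.Ico (0:ℝ) T → ∃ i, D i = (q : ℝ) := by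
    intro q hq
    refine ⟨e q, ?_⟩
    simp only [hDdef, Equiv.symm_apply_apply]
    rw [if_pos hq]
  -- Step 2: extract a subsequence converging at all points D i
  set R' : ℝ := max R 0 with hR'def
  set h : ℕ → (ℕ → E) := fun n i =>
    if ‖g n (D i)‖ ≤ R then g n (D i) else 0 with hhdef
  have hmem : ∀ n, h n ∈ Set.univ.pi (fun _ : ℕ => Metric.closedBall (0:E) R') := by
    intro n
    intro i _
    simp only [Metric.mem_closedBall, dist_zero_right]
    by_cases hb : ‖g n (D i)‖ ≤ R
    · simp only [hhdef, hb, if_true]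
      exact le_trans hb (le_max_left _ _)
    · simp [hhdef, hb, hR'def]
  have hcomp : IsCompact (Set.univ.pi (fun _ : ℕ => Metric.closedBall (0:E) R')) :=
    isCompact_univ_pi (fun _ => isCompact_closedBall 0 R')
  obtain ⟨y, -, φ, hφ, hconv⟩ := hcomp.tendsto_subseq hmem
  have hconv' : ∀ i, Tendsto (fun k => g (φ k) (D i)) atTop (nhds (y i)) := by
    intro i
    have h1 : Tendsto (fun k => h (φ k) i) atTop (nhds (y i)) :=
      tendsto_pi_nhds.mp hconv i
    refine h1.congr' ?_
    filter_upwards [eventually_ge_atTop N₁] with k hk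
    have hφk : N₁ ≤ φ k := le_trans hk hφ.le_apply
    have := hbd (φ k) hφk (D i) (hDmem i).1 (hDmem i).2
    simp [hhdef, this]
  -- convergence at every rational point of [0,T)
  have hratconv : ∀ x : ℝ, (∃ q : ℚ, (q:ℝ) = x) → x ∈ Set.Ico (0:ℝ) T →
      ∃ z : E, Tendsto (fun k => g (φ k) x) atTop (nhds z) := by
    rintro x ⟨q, rfl⟩ hx
    obtain ⟨i, hi⟩ := hDsurj q hx
    exact ⟨y i, by rw [← hi]; exact hconv' i⟩
  -- Step 3: uniform Cauchy on [0,T)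
  have master : ∀ ε : ℝ, 0 < ε → ∃ N : ℕ, ∀ k ≥ N, ∀ l ≥ N, ∀ t ∈ Set.Ico (0:ℝ) T,
      dist (g (φ k) t) (g (φ l) t) < ε := by
    intro ε hε
    obtain ⟨δ, hδ, N, hN⟩ := hequi (ε/5) (by linarith)
    obtain ⟨r, hr0, hrδ⟩ := exists_rat_btwn hδ
    have hr0' : (0:ℝ) < (r:ℝ) := hr0
    set M : ℕ := ⌈T / (r:ℝ)⌉₊ with hMdef
    set q : ℕ → ℝ := fun j => if (j : ℝ) * (r:ℝ) < T then (j : ℝ) * (r:ℝ) else 0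
      with hqdef
    have hqmem : ∀ j, q j ∈ Set.Ico (0:ℝ) T := by
      intro j
      simp only [hqdef]
      by_cases hj : (j : ℝ) * (r:ℝ) < T
      · rw [if_pos hj]
        exact ⟨mul_nonneg (Nat.cast_nonneg j) hr0'.le, hj⟩
      · rw [if_neg hj]; exact ⟨le_refl 0, hT⟩
    have hqrat : ∀ j, ∃ qq : ℚ, (qq:ℝ) = q j := by
      intro j
      by_cases hj : (j : ℝ) * (r:ℝ) < T
      · refine ⟨(j:ℚ) * r, ?_⟩
        simp only [hqdef]; rw [if_pos hj]; push_cast; ring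
      · refine ⟨0, ?_⟩
        simp only [hqdef]; rw [if_neg hj]; norm_num
    have hcq : ∀ j : ℕ, ∃ K : ℕ, ∀ k ≥ K, ∀ l ≥ K,
        dist (g (φ k) (q j)) (g (φ l) (q j)) < ε/5 := by
      intro j
      obtain ⟨z, hz⟩ := hratconv (q j) (hqrat j) (hqmem j)
      have : CauchySeq (fun k => g (φ k) (q j)) := hz.cauchySeq
      exact Metric.cauchySeq_iff.mp this (ε/5) (by linarith)
    choose K hK using hcq
    refine ⟨max N (((Finset.range (M+1)).sup K)), ?_⟩
    intro k hk l hl t ht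
    obtain ⟨ht0, htT⟩ := ht
    -- grid point below t
    set j : ℕ := ⌊t / (r:ℝ)⌋₊ with hjdef
    have hjle : (j : ℝ) * (r:ℝ) ≤ t := by
      have h1 : (j : ℝ) ≤ t / (r:ℝ) := Nat.floor_le (by positivity)
      rw [← le_div_iff₀ hr0']
      exact h1
    have hjlt : t - (j:ℝ) * (r:ℝ) < (r:ℝ) := by
      have h1 : t / (r:ℝ) < (j:ℝ) + 1 := Nat.lt_floor_add_one _
      have := (div_lt_iff₀ hr0').mp h1
      nlinarith
    have hqj : q j = (j : ℝ) * (r:ℝ) := by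
      have hlt : (j : ℝ) * (r:ℝ) < T := lt_of_le_of_lt hjle htT
      simp only [hqdef]; rw [if_pos hlt]
    have hjM : j ∈ Finset.range (M+1) := by
      refine Finset.mem_range.mpr (Nat.lt_succ_of_le ?_)
      have h1 : t / (r:ℝ) ≤ T / (r:ℝ) := by gcongr
      simpa using Nat.floor_le_of_le (le_trans h1 (Nat.le_ceil (T / (r:ℝ))))
    have hKj : K j ≤ max N ((Finset.range (M+1)).sup K) :=
      le_trans (Finset.le_sup hjM) (le_max_right _ _)
    have hNle : N ≤ max N ((Finset.range (M+1)).sup K) := le_max_left _ _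
    have hφk : N ≤ φ k := le_trans (le_trans hNle hk) hφ.le_apply
    have hφl : N ≤ φ l := le_trans (le_trans hNle hl) hφ.le_apply
    have hqt0 : 0 ≤ q j := (hqmem j).1
    have hdiff : t - q j ≤ δ := by rw [hqj]; linarith
    have hqjt : q j ≤ t := by rw [hqj]; exact hjle
    have e1 : dist (g (φ k) t) (g (φ k) (q j)) ≤ ε/5 := by
      rw [dist_eq_norm, norm_sub_rev]
      exact hN (φ k) hφk (q j) t hqt0 hqjt htT hdiff
    have e3 : dist (g (φ l) (q j)) (g (φ l) t) ≤ ε/5 := by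
      rw [dist_eq_norm]
      exact hN (φ l) hφl (q j) t hqt0 hqjt htT hdiff
    have e2 : dist (g (φ k) (q j)) (g (φ l) (q j)) < ε/5 :=
      hK j k (le_trans hKj hk) l (le_trans hKj hl)
    calc dist (g (φ k) t) (g (φ l) t)
        ≤ dist (g (φ k) t) (g (φ k) (q j)) + dist (g (φ k) (q j)) (g (φ l) (q j))
          + dist (g (φ l) (q j)) (g (φ l) t) := dist_triangle4 _ _ _ _
      _ < ε/5 + ε/5 + ε/5 := by linarith
      _ < ε := by linarith
  -- pointwise limit
  have hpt : ∀ t ∈ Set.Ico (0:ℝ) T,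
      ∃ z : E, Tendsto (fun k => g (φ k) t) atTop (nhds z) := by
    intro t ht
    apply cauchySeq_tendsto_of_complete
    rw [Metric.cauchySeq_iff]
    intro ε hε
    obtain ⟨N, hN⟩ := master ε hε
    exact ⟨N, fun k hk l hl => hN k hk l hl t ht⟩
  set glim : ℝ → E := fun t =>
    if hz : ∃ z : E, Tendsto (fun k => g (φ k) t) atTop (nhds z) then hz.choose else 0
    with hglimdef
  have hglim : ∀ t ∈ Set.Ico (0:ℝ) T,
      Tendsto (fun k => g (φ k) t) atTop (nhds (glim t)) := by
    intro t ht
    have hz := hpt t ht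
    simp only [hglimdef, dif_pos hz]
    exact hz.choose_spec
  have hUC : UniformCauchySeqOn (fun k => g (φ k)) atTop (Set.Ico (0:ℝ) T) :=
    Metric.uniformCauchySeqOn_iff.mpr (by
      intro ε hε
      obtain ⟨N, hN⟩ := master ε hε
      exact ⟨N, hN⟩)
  have hTU : TendstoUniformlyOn (fun k => g (φ k)) glim atTop (Set.Ico 0 T) :=
    hUC.tendstoUniformlyOn_of_tendsto hglim
  -- Step 4: continuity of glim
  have hmod : ∀ ε : ℝ, 0 < ε → ∃ δ : ℝ, 0 < δ ∧ ∀ t₁ t₂ : ℝ, 0 ≤ t₁ → t₁ ≤ t₂ →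
      t₂ < T → t₂ - t₁ ≤ δ → ‖glim t₁ - glim t₂‖ ≤ ε := by
    intro ε hε
    obtain ⟨δ, hδ, N, hN⟩ := hequi ε hε
    refine ⟨δ, hδ, fun t₁ t₂ h0 h12 h2T hd => ?_⟩
    have h1mem : t₁ ∈ Set.Ico (0:ℝ) T := ⟨h0, lt_of_le_of_lt h12 h2T⟩
    have h2mem : t₂ ∈ Set.Ico (0:ℝ) T := ⟨le_trans h0 h12, h2T⟩
    have hten : Tendsto (fun k => ‖g (φ k) t₁ - g (φ k) t₂‖) atTop
        (nhds ‖glim t₁ - glim t₂‖) :=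
      ((hglim t₁ h1mem).sub (hglim t₂ h2mem)).norm
    refine le_of_tendsto hten ?_
    filter_upwards [eventually_ge_atTop N] with k hk
    exact hN (φ k) (le_trans hk hφ.le_apply) t₁ t₂ h0 h12 h2T hd
  have hcont : ContinuousOn glim (Set.Ico 0 T) := by
    rw [Metric.continuousOn_iff]
    intro b hb ε hε
    obtain ⟨δ, hδ, hmod'⟩ := hmod (ε/2) (by linarith)
    refine ⟨δ, hδ, fun a ha hab => ?_⟩
    have h1 : ‖glim (min a b) - glim (max a b)‖ ≤ ε/2 := by
      apply hmod' (min a b) (max a b)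
      · exact le_min ha.1 hb.1
      · exact min_le_max
      · exact max_lt ha.2 hb.2
      · rw [Real.dist_eq] at hab
        rcases le_total a b with h | h
        · rw [min_eq_left h, max_eq_right h]
          rw [abs_sub_lt_iff] at hab
          linarith [hab.2]
        · rw [min_eq_right h, max_eq_left h]
          rw [abs_sub_lt_iff] at hab
          linarith [hab.1]
    have : dist (glim a) (glim b) ≤ ε/2 := by
      rcases le_total a b with h | h
      · rw [min_eq_left h, max_eq_right h] at h1
        rwa [dist_eq_norm]
      · rw [min_eq_right h, max_eq_left h] at h1
        rw [dist_eq_norm, norm_sub_rev]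
        exact h1
    linarith
  exact ⟨glim, hcont, φ, hφ, hTU⟩
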